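/- Let μ₀, μ₁ ∈ ℝ, σ₀, σ₁ > 0, t ∈ [0,1), and x ∈ ℝ. Then the explicit flow-matching vector field between the Gaussians N(μ₀, σ₀²) and N(μ₁, σ₁²), v(x,t) = [∫ (x₁ − x) exp(−((x − t x₁)/(1−t) − μ₀)²/(2σ₀²) − (x₁ − μ₁)²/(2σ₁²)) dx₁] / [(1−t) ∫ exp(−((x − t x₁)/(1−t) − μ₀)²/(2σ₀²) − (x₁ − μ₁)²/(2σ₁²)) dx₁], admits the closed form v(x,t) = (σ₁² t (x − μ₀) − σ₀² (1−t)(x − μ₁)) / (σ₁² t² + σ₀² (1−t)²). -/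

import Mathlib

open MeasureTheory Real

lemma odd_gauss_int (b : ℝ) : ∫ y : ℝ, y * Real.exp (-b * y ^ 2) = 0 := by
  have h := integral_neg_eq_self (fun y : ℝ => y * Real.exp (-b * y ^ 2)) volume
  simp only [neg_sq, neg_mul] at h
  rw [integral_neg] at h
  simp only [neg_mul]
  linarith

lemma gauss_shift_const (b m c : ℝ) (hb : 0 < b) :
    ∫ x₁ : ℝ, (x₁ - c) * Real.exp (-b * (x₁ - m) ^ 2)
      = (m - c) * Real.sqrt (π / b) := by
  have h := integral_sub_right_eq_self (μ := volume)
    (fun y : ℝ => (y + m - c) * Real.exp (-b * y ^ 2)) m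
  simp only [sub_add_cancel] at h
  have h2 : (∫ x₁ : ℝ, (x₁ - c) * Real.exp (-b * (x₁ - m) ^ 2))
      = ∫ y : ℝ, (y + m - c) * Real.exp (-b * y ^ 2) := by
    rw [← h]
  rw [h2]
  have hint1 : Integrable (fun y : ℝ => y * Real.exp (-b * y ^ 2)) :=
    integrable_mul_exp_neg_mul_sq hb
  have hint2 : Integrable (fun y : ℝ => Real.exp (-b * y ^ 2)) :=
    integrable_exp_neg_mul_sq hb
  have : (fun y : ℝ => (y + m - c) * Real.exp (-b * y ^ 2))
      = fun y : ℝ => y * Real.exp (-b * y ^ 2) + (m - c) * Real.exp (-b * y ^ 2) := by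
    funext y; ring
  rw [this, integral_add hint1 (hint2.const_mul _), odd_gauss_int,
    integral_const_mul, integral_gaussian, zero_add]

lemma gauss_shift_int (b m : ℝ) (hb : 0 < b) :
    ∫ x₁ : ℝ, Real.exp (-b * (x₁ - m) ^ 2) = Real.sqrt (π / b) := by
  have h := integral_sub_right_eq_self (μ := volume)
    (fun y : ℝ => Real.exp (-b * y ^ 2)) m
  rw [h, integral_gaussian]

/-- Closed form of the explicit flow-matching vector field between the Gaussians
`N(μ₀, σ₀²)` and `N(μ₁, σ₁²)` under the linear conditional flow. -/
theorem gaussian_flow_matching_vector_field_closed_form (μ₀ μ₁ σ₀ σ₁ t x : ℝ)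
    (hσ₀ : 0 < σ₀) (hσ₁ : 0 < σ₁) (ht : t ∈ Set.Ico (0 : ℝ) 1) :
    (∫ x₁ : ℝ, (x₁ - x) *
        Real.exp (-((x - t * x₁) / (1 - t) - μ₀) ^ 2 / (2 * σ₀ ^ 2) -
          (x₁ - μ₁) ^ 2 / (2 * σ₁ ^ 2))) /
      ((1 - t) * ∫ x₁ : ℝ,
        Real.exp (-((x - t * x₁) / (1 - t) - μ₀) ^ 2 / (2 * σ₀ ^ 2) -
          (x₁ - μ₁) ^ 2 / (2 * σ₁ ^ 2))) =
    (σ₁ ^ 2 * t * (x - μ₀) - σ₀ ^ 2 * (1 - t) * (x - μ₁)) /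
      (σ₁ ^ 2 * t ^ 2 + σ₀ ^ 2 * (1 - t) ^ 2) := by
  obtain ⟨ht0, ht1⟩ := ht
  set u : ℝ := 1 - t with hu_def
  have hu : 0 < u := by simp [hu_def]; linarith
  have hσ₀' : σ₀ ^ 2 ≠ 0 := by positivity
  have hσ₁' : σ₁ ^ 2 ≠ 0 := by positivity
  have hu' : u ≠ 0 := ne_of_gt hu
  set D : ℝ := σ₁ ^ 2 * t ^ 2 + σ₀ ^ 2 * u ^ 2 with hD_def
  have hD : 0 < D := by
    have : 0 < σ₀ ^ 2 * u ^ 2 := by positivity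
    have h2 : 0 ≤ σ₁ ^ 2 * t ^ 2 := by positivity
    linarith
  have hD' : D ≠ 0 := ne_of_gt hD
  set b : ℝ := D / (2 * σ₀ ^ 2 * σ₁ ^ 2 * u ^ 2) with hb_def
  have hb : 0 < b := by
    apply div_pos hD; positivity
  set m : ℝ := (t * σ₁ ^ 2 * (x - μ₀ * u) + μ₁ * σ₀ ^ 2 * u ^ 2) / D with hm_def
  set C : ℝ := -((x - t * m) / u - μ₀) ^ 2 / (2 * σ₀ ^ 2) - (m - μ₁) ^ 2 / (2 * σ₁ ^ 2)
    with hC_def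
  have key : ∀ x₁ : ℝ,
      -((x - t * x₁) / u - μ₀) ^ 2 / (2 * σ₀ ^ 2) - (x₁ - μ₁) ^ 2 / (2 * σ₁ ^ 2)
        = C + (-b * (x₁ - m) ^ 2) := by
    intro x₁
    rw [hC_def, hb_def, hm_def, hD_def]
    field_simp
    ring
  have expand : ∀ x₁ : ℝ,
      Real.exp (-((x - t * x₁) / u - μ₀) ^ 2 / (2 * σ₀ ^ 2) - (x₁ - μ₁) ^ 2 / (2 * σ₁ ^ 2))
        = Real.exp C * Real.exp (-b * (x₁ - m) ^ 2) := by
    intro x₁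
    rw [key x₁, Real.exp_add]
  have hnum : (∫ x₁ : ℝ, (x₁ - x) *
      Real.exp (-((x - t * x₁) / u - μ₀) ^ 2 / (2 * σ₀ ^ 2) - (x₁ - μ₁) ^ 2 / (2 * σ₁ ^ 2)))
      = Real.exp C * ((m - x) * Real.sqrt (π / b)) := by
    rw [← gauss_shift_const b m x hb, ← integral_const_mul]
    congr 1 with x₁
    rw [expand x₁]; ring
  have hden : (∫ x₁ : ℝ,
      Real.exp (-((x - t * x₁) / u - μ₀) ^ 2 / (2 * σ₀ ^ 2) - (x₁ - μ₁) ^ 2 / (2 * σ₁ ^ 2)))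
      = Real.exp C * Real.sqrt (π / b) := by
    rw [← gauss_shift_int b m hb, ← integral_const_mul]
    congr 1 with x₁
    rw [expand x₁]
  rw [hnum, hden]
  have hsqrt : Real.sqrt (π / b) ≠ 0 := by
    apply ne_of_gt
    apply Real.sqrt_pos.mpr
    positivity
  have hexp : Real.exp C ≠ 0 := Real.exp_ne_zero C
  have hlhs : Real.exp C * ((m - x) * Real.sqrt (π / b)) /
      (u * (Real.exp C * Real.sqrt (π / b))) = (m - x) / u := by
    field_simp
  rw [hlhs, hm_def, hD_def]
  rw [div_eq_div_iff (by positivity) (by positivity)]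
  field_simp
  ring
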